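/- For any x₁, x₂ ∈ D, |V(x₁) − V(x₂)| ≤ M₁·|x₁ − x₂|. (Note that D need not be convex; the segment from x₁ to x₂ may leave D.) -/

import Mathlib

open Set MeasureTheory Metric
open scoped RealInnerProductSpace

lemma aux_exists (g : ℝ → ℝ) (hg : Continuous g) (hab : g 0 ≤ g 1) :
    ∃ s t : ℝ, 0 ≤ s ∧ s ≤ t ∧ t ≤ 1 ∧ g s = g 0 ∧ g t = g 1 ∧
      ∀ u, s ≤ u → u ≤ t → g 0 ≤ g u ∧ g u ≤ g 1 := by
  set T : Set ℝ := Icc (0:ℝ) 1 ∩ g ⁻¹' {g 1} with hT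
  have hTne : T.Nonempty := ⟨1, ⟨by norm_num, rfl⟩⟩
  have hTbdd : BddBelow T := ⟨0, fun u hu => hu.1.1⟩
  have hTcl : IsClosed T := isClosed_Icc.inter (isClosed_singleton.preimage hg)
  set t := sInf T with htdef
  have ht : t ∈ T := hTcl.csInf_mem hTne hTbdd
  have ht0 : 0 ≤ t := ht.1.1
  have ht1 : t ≤ 1 := ht.1.2
  have htg : g t = g 1 := ht.2
  have hle1 : ∀ u, 0 ≤ u → u ≤ t → g u ≤ g 1 := by
    intro u hu0 hut
    by_contra h
    push_neg at h
    obtain ⟨v, hv, hgv⟩ := intermediate_value_Icc hu0 hg.continuousOn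
      (show g 1 ∈ Icc (g 0) (g u) from ⟨hab, h.le⟩)
    have htv : t ≤ v := csInf_le hTbdd ⟨⟨hv.1, le_trans hv.2 (le_trans hut ht1)⟩, hgv⟩
    have : u = t := le_antisymm hut (le_trans htv hv.2)
    rw [this, htg] at h
    exact lt_irrefl _ h
  set S : Set ℝ := Icc (0:ℝ) t ∩ g ⁻¹' {g 0} with hS
  have hSne : S.Nonempty := ⟨0, ⟨⟨le_refl 0, ht0⟩, rfl⟩⟩
  have hSbdd : BddAbove S := ⟨t, fun u hu => hu.1.2⟩
  have hScl : IsClosed S := isClosed_Icc.inter (isClosed_singleton.preimage hg)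
  set s := sSup S with hsdef
  have hs : s ∈ S := hScl.csSup_mem hSne hSbdd
  refine ⟨s, t, hs.1.1, hs.1.2, ht1, hs.2, htg, ?_⟩
  intro u hsu hut
  constructor
  · by_contra h
    push_neg at h
    obtain ⟨v, hv, hgv⟩ := intermediate_value_Icc hut hg.continuousOn
      (show g 0 ∈ Icc (g u) (g t) from ⟨h.le, htg ▸ hab⟩)
    have hvs : v ≤ s := le_csSup hSbdd ⟨⟨le_trans (le_trans hs.1.1 hsu) hv.1, hv.2⟩, hgv⟩
    have hus : u = s := le_antisymm (le_trans hv.1 hvs) hsu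
    have hvu : v = s := le_antisymm hvs (hus ▸ hv.1)
    rw [hus, hs.2] at h
    exact lt_irrefl _ h
  · exact hle1 u (le_trans hs.1.1 hsu) hut

set_option maxHeartbeats 1000000 in
lemma aux_main {n : ℕ}
    (V : EuclideanSpace ℝ (Fin n) → ℝ) (c₁ c₂ M₁ : ℝ)
    (hV_C1 : ContDiff ℝ 1 V)
    (hM₁ : IsGreatest ((fun y => ‖gradient V y‖) ''
      {y : EuclideanSpace ℝ (Fin n) | c₁ ≤ V y ∧ V y ≤ c₂}) M₁)
    (x₁ x₂ : EuclideanSpace ℝ (Fin n))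
    (h₁ : c₁ ≤ V x₁ ∧ V x₁ ≤ c₂) (h₂ : c₁ ≤ V x₂ ∧ V x₂ ≤ c₂)
    (hord : V x₂ ≤ V x₁) :
    V x₁ - V x₂ ≤ M₁ * ‖x₁ - x₂‖ := by
  set γ : ℝ → EuclideanSpace ℝ (Fin n) := fun u => x₂ + u • (x₁ - x₂) with hγ
  have hγ0 : γ 0 = x₂ := by simp [hγ]
  have hγ1 : γ 1 = x₁ := by simp [hγ]
  have hγcont : Continuous γ := by continuity
  set g : ℝ → ℝ := fun u => V (γ u) with hgdef
  have hg : Continuous g := (hV_C1.continuous).comp hγcont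
  have hg0 : g 0 = V x₂ := by rw [hgdef]; simp [hγ0]
  have hg1 : g 1 = V x₁ := by rw [hgdef]; simp [hγ1]
  obtain ⟨s, t, hs0, hst, ht1, hgs, hgt, hbound⟩ := aux_exists g hg (by rw [hg0, hg1]; exact hord)
  set K := segment ℝ (γ s) (γ t) with hK
  have hmem : ∀ y ∈ K, c₁ ≤ V y ∧ V y ≤ c₂ := by
    intro y hy
    obtain ⟨a, b, ha, hb, hab1, hy⟩ := hy
    have hyu : y = γ (a * s + b * t) := by
      have hb' : b = 1 - a := by linarith
      subst hb'
      rw [← hy, hγ]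
      simp only
      module
    have hu1 : s ≤ a * s + b * t := by nlinarith
    have hu2 : a * s + b * t ≤ t := by nlinarith
    obtain ⟨hb1, hb2⟩ := hbound _ hu1 hu2
    rw [hg0] at hb1; rw [hg1] at hb2
    constructor
    · calc c₁ ≤ V x₂ := h₂.1
        _ ≤ g (a * s + b * t) := hb1
        _ = V y := by rw [hyu]
    · calc V y = g (a * s + b * t) := by rw [hyu]
        _ ≤ V x₁ := hb2
        _ ≤ c₂ := h₁.2
  have hdiff : Differentiable ℝ V := hV_C1.differentiable one_ne_zero
  have hgradnorm : ∀ y, ‖fderiv ℝ V y‖ = ‖gradient V y‖ := by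
    intro y
    rw [gradient]
    rw [LinearIsometryEquiv.norm_map]
  have hfb : ∀ y ∈ K, ‖fderiv ℝ V y‖ ≤ M₁ := by
    intro y hy
    rw [hgradnorm]
    exact hM₁.2 ⟨y, hmem y hy, rfl⟩
  have hconv : Convex ℝ K := convex_segment _ _
  have key := Convex.norm_image_sub_le_of_norm_fderiv_le
    (fun y _ => hdiff y) hfb hconv
    (left_mem_segment ℝ (γ s) (γ t)) (right_mem_segment ℝ (γ s) (γ t))
  have hdist : ‖γ t - γ s‖ ≤ ‖x₁ - x₂‖ := by
    have : γ t - γ s = (t - s) • (x₁ - x₂) := by rw [hγ]; simp only; module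
    rw [this, norm_smul, Real.norm_eq_abs, abs_of_nonneg (by linarith)]
    nlinarith [norm_nonneg (x₁ - x₂)]
  have hM₁nn : 0 ≤ M₁ := by
    obtain ⟨y, _, hy⟩ := hM₁.1
    rw [← hy]; positivity
  calc V x₁ - V x₂ = g t - g s := by rw [hgs, hgt, hg0, hg1]
    _ ≤ ‖V (γ t) - V (γ s)‖ := le_abs_self _
    _ ≤ M₁ * ‖γ t - γ s‖ := key
    _ ≤ M₁ * ‖x₁ - x₂‖ := by nlinarith

theorem stmt_2 {n : ℕ}
    (V : EuclideanSpace ℝ (Fin n) → ℝ) (c₁ c₂ M₁ : ℝ)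
    (hV_nonneg : ∀ y, 0 ≤ V y) (hV0 : V 0 = 0) (hV_pos : ∀ y, y ≠ 0 → 0 < V y)
    (hV_C1 : ContDiff ℝ 1 V)
    (hc₁ : 0 < c₁) (hc₁c₂ : c₁ < c₂)
    (hD_compact : IsCompact {y : EuclideanSpace ℝ (Fin n) | c₁ ≤ V y ∧ V y ≤ c₂})
    (hM₁ : IsGreatest ((fun y => ‖gradient V y‖) ''
      {y : EuclideanSpace ℝ (Fin n) | c₁ ≤ V y ∧ V y ≤ c₂}) M₁) :
    ∀ x₁ ∈ {y : EuclideanSpace ℝ (Fin n) | c₁ ≤ V y ∧ V y ≤ c₂},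
    ∀ x₂ ∈ {y : EuclideanSpace ℝ (Fin n) | c₁ ≤ V y ∧ V y ≤ c₂},
      |V x₁ - V x₂| ≤ M₁ * ‖x₁ - x₂‖ := by
  intro x₁ hx₁ x₂ hx₂
  rcases le_total (V x₂) (V x₁) with h | h
  · rw [abs_of_nonneg (by linarith)]
    exact aux_main V c₁ c₂ M₁ hV_C1 hM₁ x₁ x₂ hx₁ hx₂ h
  · rw [abs_of_nonpos (by linarith), neg_sub, norm_sub_rev]
    exact aux_main V c₁ c₂ M₁ hV_C1 hM₁ x₂ x₁ hx₂ hx₁ h
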